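/- Let 𝒢 be a group that admits a faithful representation by n×n tropical matrices, i.e., there exists an injective group-multiplication-preserving map from 𝒢 into the multiplicative semigroup (𝕋^{n×n}, ⊗). Then 𝒢 has a torsion-free abelian subgroup of index at most n!. -/

import Mathlib

/-- The tropical (max-plus) semiring carrier: `ℝ ∪ {-∞}`, with `⊥` playing the
role of `-∞`. -/
abbrev Trop : Type := WithBot ℝ

/-- Tropical matrix multiplication: `(A ⊗ B) i j = max_k (A i k + B k j)`. -/
def tropMulMat {n m p : ℕ} (A : Matrix (Fin n) (Fin m) Trop)
    (B : Matrix (Fin m) (Fin p) Trop) : Matrix (Fin n) (Fin p) Trop :=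
  fun i j => Finset.univ.sup fun k => A i k + B k j

namespace TropAux

lemma sup_add_right {α : Type*} (s : Finset α) (f : α → Trop) (c : Trop) :
    s.sup f + c = s.sup fun a => f a + c := by
  classical
  induction s using Finset.induction_on with
  | empty => simp
  | insert _ _ h ih =>
      rw [Finset.sup_insert, Finset.sup_insert, ← ih, ← max_add_add_right]

lemma sup_add_left {α : Type*} (s : Finset α) (f : α → Trop) (c : Trop) :
    c + s.sup f = s.sup fun a => c + f a := by
  classical
  induction s using Finset.induction_on with
  | empty => simp
  | insert _ _ h ih =>
      rw [Finset.sup_insert, Finset.sup_insert, ← ih, ← max_add_add_left]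

lemma tropMul_assoc {n : ℕ} (A B C : Matrix (Fin n) (Fin n) Trop) :
    tropMulMat (tropMulMat A B) C = tropMulMat A (tropMulMat B C) := by
  funext i j
  show (Finset.univ.sup fun l => (Finset.univ.sup fun k => A i k + B k l) + C l j)
      = Finset.univ.sup fun k => A i k + Finset.univ.sup fun l => B k l + C l j
  have h1 : ∀ l, (Finset.univ.sup fun k => A i k + B k l) + C l j
      = Finset.univ.sup fun k => A i k + B k l + C l j := fun l => sup_add_right _ _ _
  have h2 : ∀ k, A i k + Finset.univ.sup (fun l => B k l + C l j)
      = Finset.univ.sup fun l => A i k + (B k l + C l j) := fun k => sup_add_left _ _ _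
  simp only [h1, h2, add_assoc]
  exact Finset.sup_comm _ _ _

lemma le_entry {n : ℕ} (A B : Matrix (Fin n) (Fin n) Trop) (i k j : Fin n) :
    A i k + B k j ≤ tropMulMat A B i j := Finset.le_sup (f := fun k => A i k + B k j) (Finset.mem_univ k)

lemma exists_entry {n : ℕ} (A B : Matrix (Fin n) (Fin n) Trop) (i j : Fin n)
    (h : tropMulMat A B i j ≠ ⊥) : ∃ k, tropMulMat A B i j = A i k + B k j := by
  have hne : (Finset.univ : Finset (Fin n)).Nonempty := by
    rcases Finset.eq_empty_or_nonempty (Finset.univ : Finset (Fin n)) with he | hne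
    · exfalso; apply h; show Finset.univ.sup _ = ⊥; rw [he]; rfl
    · exact hne
  obtain ⟨k, _, hk⟩ := Finset.exists_mem_eq_sup Finset.univ hne fun k => A i k + B k j
  exact ⟨k, hk⟩

lemma ne_bot_left {a b : Trop} (h : a + b ≠ ⊥) : a ≠ ⊥ :=
  fun ha => h (by rw [ha, WithBot.bot_add])

lemma ne_bot_right {a b : Trop} (h : a + b ≠ ⊥) : b ≠ ⊥ :=
  fun hb => h (by rw [hb, WithBot.add_bot])

lemma eq_real_of_add_eq_zero {a b : Trop} (h : a + b = 0) :
    ∃ x : ℝ, a = ((x : ℝ) : Trop) ∧ b = ((-x : ℝ) : Trop) := by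
  induction a using WithBot.recBotCoe with
  | bot => simp at h
  | coe x =>
      induction b using WithBot.recBotCoe with
      | bot => simp at h
      | coe y =>
          refine ⟨x, rfl, ?_⟩
          have : ((x + y : ℝ) : Trop) = ((0:ℝ) : Trop) := by exact_mod_cast h
          have hxy : x + y = 0 := by exact_mod_cast this
          have : y = -x := by linarith
          rw [this]

lemma add_cancel_real {a b : Trop} {c : ℝ} (h : a + (c : ℝ) = b + (c : ℝ)) : a = b := by
  induction a using WithBot.recBotCoe with
  | bot =>
      induction b using WithBot.recBotCoe with
      | bot => rfl
      | coe y => rw [WithBot.bot_add] at h; exact absurd h.symm (by exact_mod_cast WithBot.coe_ne_bot)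
  | coe x =>
      induction b using WithBot.recBotCoe with
      | bot => rw [WithBot.bot_add] at h; exact absurd h (by exact_mod_cast WithBot.coe_ne_bot)
      | coe y =>
          have hx : ((x + c : ℝ) : Trop) = ((y + c : ℝ) : Trop) := by exact_mod_cast h
          have : x + c = y + c := by exact_mod_cast hx
          have : x = y := by linarith
          rw [this]

lemma nonneg_of_le_add {x : ℝ} {c : Trop} (h : ((x:ℝ) : Trop) ≤ ((x:ℝ):Trop) + c) :
    (0 : Trop) ≤ c := by
  induction c using WithBot.recBotCoe with
  | bot => rw [WithBot.add_bot] at h; exact absurd h (by simp)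
  | coe y =>
      have hx : ((x : ℝ) : Trop) ≤ ((x + y : ℝ) : Trop) := by exact_mod_cast h
      have : x ≤ x + y := by exact_mod_cast hx
      have hy : (0:ℝ) ≤ y := by linarith
      exact_mod_cast WithBot.coe_le_coe.mpr hy

lemma le_cancel_real {a b : Trop} {c : ℝ} (h : a + (c : ℝ) ≤ b + (c : ℝ)) : a ≤ b := by
  induction a using WithBot.recBotCoe with
  | bot => exact bot_le
  | coe x =>
      induction b using WithBot.recBotCoe with
      | bot =>
          rw [WithBot.bot_add] at h
          exact absurd h (by simp)
      | coe y =>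
          have hx : ((x + c : ℝ) : Trop) ≤ ((y + c : ℝ) : Trop) := by exact_mod_cast h
          have : x + c ≤ y + c := by exact_mod_cast hx
          have : x ≤ y := by linarith
          exact_mod_cast WithBot.coe_le_coe.mpr this

lemma le_zero_of_add_self_le {a : Trop} (h : a + a ≤ a) : a ≤ 0 := by
  induction a using WithBot.recBotCoe with
  | bot => exact bot_le
  | coe x =>
      have hx : x + x ≤ x := by exact_mod_cast h
      have : x ≤ 0 := by linarith
      exact_mod_cast WithBot.coe_le_coe.mpr this

end TropAux

namespace TropAux

lemma diag_nonpos {n : ℕ} {E : Matrix (Fin n) (Fin n) Trop}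
    (hE : tropMulMat E E = E) (k : Fin n) : E k k ≤ 0 := by
  have h : E k k + E k k ≤ E k k := by
    conv_rhs => rw [← hE]
    exact le_entry E E k k k
  exact le_zero_of_add_self_le h

lemma lemA {n : ℕ} {E : Matrix (Fin n) (Fin n) Trop}
    (hE : tropMulMat E E = E) (p q : Fin n) (h : E p q ≠ ⊥) :
    ∃ k, E k k = 0 ∧ E p q = E p k + E k q := by
  classical
  set P : Fin n → Prop := fun k => E p q = E p k + E k q with hP
  have step : ∀ k, P k → ∃ k', P k' ∧ E p k' = E p k + E k k' := by
    intro k hk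
    have hkq : E k q ≠ ⊥ := ne_bot_right (hk ▸ h)
    have hkq2 : tropMulMat E E k q ≠ ⊥ := by rw [hE]; exact hkq
    obtain ⟨k', hk'⟩ := exists_entry E E k q hkq2
    rw [hE] at hk'
    have hk'q : E k' q ≠ ⊥ := ne_bot_right (hk' ▸ hkq)
    have h1 : E p k + E k k' ≤ E p k' := by
      conv_rhs => rw [← hE]
      exact (le_entry E E p k k')
    have h2 : E p k' + E k' q ≤ E p q := by
      conv_rhs => rw [← hE]
      exact (le_entry E E p k' q)
    have heq : E p q = (E p k + E k k') + E k' q := by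
      rw [hk, hk', add_assoc]
    obtain ⟨y, hy⟩ := WithBot.ne_bot_iff_exists.mp hk'q
    have h3 : E p k' ≤ E p k + E k k' := by
      refine le_cancel_real (c := y) ?_
      rw [hy]
      exact heq ▸ h2
    have h4 : E p k' = E p k + E k k' := le_antisymm h3 h1
    exact ⟨k', by rw [hP]; simp only; rw [heq, h4], h4⟩
  have hpq2 : tropMulMat E E p q ≠ ⊥ := by rw [hE]; exact h
  obtain ⟨k₀, hk₀⟩ := exists_entry E E p q hpq2
  rw [hE] at hk₀
  choose nxt hnxtP hnxtS using step
  let seq : ℕ → {k // P k} := fun t =>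
    Nat.rec ⟨k₀, hk₀⟩ (fun _ ih => ⟨nxt ih.1 ih.2, hnxtP ih.1 ih.2⟩) t
  have hseq : ∀ t : ℕ, E p (seq (t+1)).1 = E p (seq t).1 + E (seq t).1 (seq (t+1)).1 :=
    fun t => hnxtS (seq t).1 (seq t).2
  have chain : ∀ a b : ℕ, a < b → E p (seq b).1 ≤ E p (seq a).1 + E (seq a).1 (seq b).1 := by
    intro a b hab
    induction b with
    | zero => omega
    | succ b ih =>
        rcases Nat.lt_or_ge a b with hb | hb
        · calc E p (seq (b+1)).1 = E p (seq b).1 + E (seq b).1 (seq (b+1)).1 := hseq b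
          _ ≤ (E p (seq a).1 + E (seq a).1 (seq b).1) + E (seq b).1 (seq (b+1)).1 :=
              add_le_add_left (ih hb) _
          _ = E p (seq a).1 + (E (seq a).1 (seq b).1 + E (seq b).1 (seq (b+1)).1) := add_assoc _ _ _
          _ ≤ E p (seq a).1 + E (seq a).1 (seq (b+1)).1 := by
              refine add_le_add_right ?_ _
              conv_rhs => rw [← hE]
              exact le_entry E E (seq a).1 (seq b).1 (seq (b+1)).1
        · have : a = b := by omega
          subst this
          exact le_of_eq (hseq a)
  have hcard : Fintype.card (Fin n) < Fintype.card (Fin (n+1)) := by simp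
  obtain ⟨a, b, hne, heq⟩ :=
    Fintype.exists_ne_map_eq_of_card_lt (fun t : Fin (n+1) => (seq t.1).1) hcard
  -- wlog a < b
  have main : ∀ a b : ℕ, a < b → (seq a).1 = (seq b).1 →
      ∃ k, E k k = 0 ∧ E p q = E p k + E k q := by
    intro a b hab he
    have hch := chain a b hab
    rw [← he] at hch
    have hpa : E p (seq a).1 ≠ ⊥ := ne_bot_left ((seq a).2 ▸ h)
    obtain ⟨x, hx⟩ := WithBot.ne_bot_iff_exists.mp hpa
    rw [← hx] at hch
    have h0 : (0 : Trop) ≤ E (seq a).1 (seq a).1 := nonneg_of_le_add hch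
    exact ⟨(seq a).1, le_antisymm (diag_nonpos hE _) h0, (seq a).2⟩
  rcases lt_or_gt_of_ne (fun hh : (a:ℕ) = (b:ℕ) => hne (Fin.ext hh)) with hlt | hgt
  · exact main a b hlt heq
  · exact main b a hgt heq.symm

end TropAux

namespace TropAux

section Grp

variable {n : ℕ} {G : Type*} [Group G] (φ : G → Matrix (Fin n) (Fin n) Trop)

lemma sum_zero_pair {x y a b c d : Trop} (hx : a + b ≤ x) (hy : c + d ≤ y)
    (h0 : (a + b) + (c + d) = 0) (hup : x + y ≤ 0) : x + y = 0 :=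
  le_antisymm hup (le_trans (le_of_eq h0.symm) (add_le_add hx hy))

variable (hm : ∀ g h : G, φ (g * h) = tropMulMat (φ g) (φ h))

include hm

lemma hEE' : tropMulMat (φ 1) (φ 1) = φ 1 := by rw [← hm, one_mul]

lemma hgE : ∀ g : G, tropMulMat (φ g) (φ 1) = φ g := fun g => by rw [← hm, mul_one]

lemma hEg : ∀ g : G, tropMulMat (φ 1) (φ g) = φ g := fun g => by rw [← hm, one_mul]

lemma hinvr : ∀ g : G, tropMulMat (φ g) (φ g⁻¹) = φ 1 := fun g => by
  rw [← hm, mul_inv_cancel]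

lemma hinvl : ∀ g : G, tropMulMat (φ g⁻¹) (φ g) = φ 1 := fun g => by
  rw [← hm, inv_mul_cancel]

lemma hdiag : ∀ i, φ (1 : G) i i ≤ 0 := diag_nonpos (hEE' φ hm)

lemma pairup : ∀ k l, φ (1 : G) k l + φ (1 : G) l k ≤ 0 := fun k l => by
  have h := le_entry (φ 1) (φ 1) k l k
  rw [hEE' φ hm] at h
  exact h.trans (hdiag φ hm k)

/-- The matching relation induced by `g`. -/
def Rr (g : G) (i k : Fin n) : Prop := φ g i k + φ g⁻¹ k i = 0

lemma Rle : ∀ (g : G) (i k : Fin n), φ g i k + φ g⁻¹ k i ≤ 0 := by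
  intro g i k
  have h1 := le_entry (φ g) (φ g⁻¹) i k i
  rw [hinvr φ hm g] at h1
  exact h1.trans (hdiag φ hm i)

lemma Rtotal : ∀ (g : G) (i : Fin n), φ 1 i i = 0 →
    ∃ k, φ (1:G) k k = 0 ∧ Rr φ g i k := by
  intro g i hi
  have hne : tropMulMat (φ g) (φ g⁻¹) i i ≠ ⊥ := by
    rw [hinvr φ hm g, hi]; simp
  obtain ⟨k, hk⟩ := exists_entry _ _ i i hne
  rw [hinvr φ hm g, hi] at hk
  refine ⟨k, ?_, hk.symm⟩
  apply le_antisymm (hdiag φ hm k)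
  have h1 := le_entry (φ g⁻¹) (φ g) k i k
  rw [hinvl φ hm g] at h1
  calc (0 : Trop) = φ g⁻¹ k i + φ g i k := by rw [add_comm]; exact hk
  _ ≤ φ 1 k k := h1

omit hm in
lemma Rsymm : ∀ (g : G) (i k : Fin n), Rr φ g i k → Rr φ g⁻¹ k i := by
  intro g i k h
  show φ g⁻¹ k i + φ g⁻¹⁻¹ i k = 0
  rw [inv_inv, add_comm]
  exact h

lemma Rcomp : ∀ (g h' : G) (i k m : Fin n), Rr φ g i k → Rr φ h' k m →
    Rr φ (g * h') i m := by
  intro g h' i k m h1 h2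
  show φ (g * h') i m + φ (g * h')⁻¹ m i = 0
  refine sum_zero_pair (a := φ g i k) (b := φ h' k m) (c := φ h'⁻¹ m k)
    (d := φ g⁻¹ k i) ?_ ?_ ?_ (Rle φ hm _ _ _)
  · rw [hm g h']; exact le_entry _ _ i k m
  · rw [mul_inv_rev, hm]; exact le_entry _ _ m k i
  · calc (φ g i k + φ h' k m) + (φ h'⁻¹ m k + φ g⁻¹ k i)
        = (φ g i k + φ g⁻¹ k i) + (φ h' k m + φ h'⁻¹ m k) := by abel
    _ = 0 := by rw [h1, h2, add_zero]

lemma Rcongr_left : ∀ (g : G) (i j k : Fin n), Rr φ g i k →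
    φ (1:G) i j + φ (1:G) j i = 0 → Rr φ g j k := by
  intro g i j k h1 hij
  show φ g j k + φ g⁻¹ k j = 0
  refine sum_zero_pair (a := φ (1:G) j i) (b := φ g i k) (c := φ g⁻¹ k i)
    (d := φ (1:G) i j) ?_ ?_ ?_ (Rle φ hm _ _ _)
  · have h := le_entry (φ 1) (φ g) j i k
    rwa [hEg φ hm g] at h
  · have h := le_entry (φ g⁻¹) (φ 1) k i j
    rwa [hgE φ hm g⁻¹] at h
  · calc (φ (1:G) j i + φ g i k) + (φ g⁻¹ k i + φ (1:G) i j)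
        = (φ g i k + φ g⁻¹ k i) + (φ (1:G) i j + φ (1:G) j i) := by abel
    _ = 0 := by rw [h1, hij, add_zero]

lemma Rcongr_right : ∀ (g : G) (i k l : Fin n), Rr φ g i k →
    φ (1:G) k l + φ (1:G) l k = 0 → Rr φ g i l := by
  intro g i k l h1 hkl
  show φ g i l + φ g⁻¹ l i = 0
  refine sum_zero_pair (a := φ g i k) (b := φ (1:G) k l) (c := φ (1:G) l k)
    (d := φ g⁻¹ k i) ?_ ?_ ?_ (Rle φ hm _ _ _)
  · have h := le_entry (φ g) (φ 1) i k l
    rwa [hgE φ hm g] at h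
  · have h := le_entry (φ 1) (φ g⁻¹) l k i
    rwa [hEg φ hm g⁻¹] at h
  · calc (φ g i k + φ (1:G) k l) + (φ (1:G) l k + φ g⁻¹ k i)
        = (φ g i k + φ g⁻¹ k i) + (φ (1:G) k l + φ (1:G) l k) := by abel
    _ = 0 := by rw [h1, hkl, add_zero]

lemma Rfunc : ∀ (g : G) (i k l : Fin n), Rr φ g i k → Rr φ g i l →
    φ (1:G) k l + φ (1:G) l k = 0 := by
  intro g i k l h1 h2
  refine sum_zero_pair (a := φ g⁻¹ k i) (b := φ g i l) (c := φ g⁻¹ l i)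
    (d := φ g i k) ?_ ?_ ?_ (pairup φ hm k l)
  · have h := le_entry (φ g⁻¹) (φ g) k i l
    rwa [hinvl φ hm g] at h
  · have h := le_entry (φ g⁻¹) (φ g) l i k
    rwa [hinvl φ hm g] at h
  · calc (φ g⁻¹ k i + φ g i l) + (φ g⁻¹ l i + φ g i k)
        = (φ g i k + φ g⁻¹ k i) + (φ g i l + φ g⁻¹ l i) := by abel
    _ = 0 := by rw [h1, h2, add_zero]

omit hm in
lemma Rone : ∀ i k : Fin n, φ (1:G) i k + φ (1:G) k i = 0 → Rr φ (1 : G) i k := by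
  intro i k h
  show φ (1:G) i k + φ (1:G)⁻¹ k i = 0
  rwa [inv_one]

omit hm in
lemma Rone' : ∀ i k : Fin n, Rr φ (1 : G) i k → φ (1:G) i k + φ (1:G) k i = 0 := by
  intro i k h
  have h' : φ (1:G) i k + φ (1:G)⁻¹ k i = 0 := h
  rwa [inv_one] at h'

/-- The key rigidity lemma: an element acting trivially (with zero weights)
on critical indices equals the identity matrix. -/
lemma key (g : G) (hg : ∀ i, φ (1:G) i i = 0 → φ g i i = 0)
    (hg' : ∀ i, φ (1:G) i i = 0 → φ g⁻¹ i i = 0) : φ g = φ 1 := by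
  have hEE := hEE' φ hm
  have h3a : ∀ k l, φ (1:G) k k = 0 → φ (1:G) l l = 0 → φ g k l = φ (1:G) k l := by
    intro k l hk hl
    apply le_antisymm
    · have h := le_entry (φ g) (φ g⁻¹) k l l
      rw [hinvr φ hm g, hg' l hl, add_zero] at h
      exact h
    · have h := le_entry (φ g) (φ 1) k k l
      rw [hgE φ hm g, hg k hk, zero_add] at h
      exact h
  funext p q
  apply le_antisymm
  · by_cases hb : φ g p q = ⊥
    · rw [hb]; exact bot_le
    have hEB := hEg φ hm g
    have h1 : tropMulMat (φ 1) (φ g) p q ≠ ⊥ := by rw [hEB]; exact hb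
    obtain ⟨k₀, hk₀⟩ := exists_entry _ _ p q h1
    rw [hEB] at hk₀
    have hpk₀ : φ (1:G) p k₀ ≠ ⊥ := ne_bot_left (hk₀ ▸ hb)
    obtain ⟨k, hkk, hdk⟩ := lemA hEE p k₀ hpk₀
    have hstep1 : φ g p q ≤ φ (1:G) p k + φ g k q := by
      rw [hk₀, hdk, add_assoc]
      refine add_le_add_right ?_ _
      have h := le_entry (φ 1) (φ g) k k₀ q
      rwa [hEB] at h
    have hgkq : φ g k q ≠ ⊥ := by
      intro hbo
      rw [hbo, WithBot.add_bot] at hstep1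
      exact hb (le_bot_iff.mp hstep1)
    have hBE := hgE φ hm g
    have h2 : tropMulMat (φ g) (φ 1) k q ≠ ⊥ := by rw [hBE]; exact hgkq
    obtain ⟨l₀, hl₀⟩ := exists_entry _ _ k q h2
    rw [hBE] at hl₀
    have hl₀q : φ (1:G) l₀ q ≠ ⊥ := ne_bot_right (hl₀ ▸ hgkq)
    obtain ⟨l, hll, hdl⟩ := lemA hEE l₀ q hl₀q
    have hstep2 : φ g k q ≤ φ g k l + φ (1:G) l q := by
      rw [hl₀, hdl, ← add_assoc]
      refine add_le_add_left ?_ _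
      have h := le_entry (φ g) (φ 1) k l₀ l
      rwa [hBE] at h
    have hcomb : φ g p q ≤ φ (1:G) p k + (φ (1:G) k l + φ (1:G) l q) := by
      calc φ g p q ≤ φ (1:G) p k + φ g k q := hstep1
      _ ≤ φ (1:G) p k + (φ g k l + φ (1:G) l q) := add_le_add_right hstep2 _
      _ = φ (1:G) p k + (φ (1:G) k l + φ (1:G) l q) := by rw [h3a k l hkk hll]
    refine hcomb.trans ?_
    have ha : φ (1:G) k l + φ (1:G) l q ≤ φ (1:G) k q := by
      have h := le_entry (φ 1) (φ 1) k l q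
      rwa [hEE] at h
    have hb2 : φ (1:G) p k + φ (1:G) k q ≤ φ (1:G) p q := by
      have h := le_entry (φ 1) (φ 1) p k q
      rwa [hEE] at h
    exact le_trans (add_le_add_right ha _) hb2
  · by_cases hb : φ (1:G) p q = ⊥
    · rw [hb]; exact bot_le
    obtain ⟨k, hkk, hdk⟩ := lemA hEE p q hb
    have hkq : φ (1:G) k q ≠ ⊥ := ne_bot_right (hdk ▸ hb)
    obtain ⟨l, hll, hdl⟩ := lemA hEE k q hkq
    rw [hdk, hdl, ← h3a k l hkk hll]
    have h1 : φ g k l + φ (1:G) l q ≤ φ g k q := by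
      have h := le_entry (φ g) (φ 1) k l q
      rwa [hgE φ hm g] at h
    have h2 : φ (1:G) p k + φ g k q ≤ φ g p q := by
      have h := le_entry (φ 1) (φ g) p k q
      rwa [hEg φ hm g] at h
    calc φ (1:G) p k + (φ g k l + φ (1:G) l q)
        ≤ φ (1:G) p k + φ g k q := add_le_add_right h1 _
    _ ≤ φ g p q := h2

lemma powerle (g : G) (i : Fin n) (hi : φ (1:G) i i = 0) (x : ℝ)
    (hx : φ g i i = ((x : ℝ) : Trop)) :
    ∀ m : ℕ, (((m : ℝ) * x : ℝ) : Trop) ≤ φ (g ^ m) i i := by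
  intro m
  induction m with
  | zero =>
      rw [pow_zero, hi]
      norm_num
  | succ m ih =>
      have h := le_entry (φ (g ^ m)) (φ g) i i i
      rw [← hm (g ^ m) g, ← pow_succ] at h
      have hcast : ((((m + 1 : ℕ) : ℝ) * x : ℝ) : Trop)
          = (((m : ℝ) * x : ℝ) : Trop) + ((x : ℝ) : Trop) := by
        have hre : ((m + 1 : ℕ) : ℝ) * x = (m : ℝ) * x + x := by push_cast; ring
        rw [hre, WithBot.coe_add]
      rw [hcast]
      calc (((m : ℝ) * x : ℝ) : Trop) + ((x : ℝ) : Trop)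
          ≤ φ (g ^ m) i i + φ g i i := add_le_add ih (le_of_eq hx.symm)
      _ ≤ φ (g ^ (m + 1)) i i := h

end Grp

end TropAux

open TropAux in
theorem torsionFree_abelian_subgroup_of_tropical_rep {n : ℕ}
    (G : Type*) [Group G] (φ : G → Matrix (Fin n) (Fin n) Trop)
    (hinj : Function.Injective φ)
    (hmul : ∀ g h : G, φ (g * h) = tropMulMat (φ g) (φ h)) :
    ∃ H : Subgroup G,
      (∀ a b : H, a * b = b * a) ∧
      (∀ a : H, IsOfFinOrder a → a = 1) ∧
      0 < H.index ∧ H.index ≤ Nat.factorial n := by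
  classical
  have hEE := hEE' φ hmul
  -- the critical indices and their setoid
  let Cr := {i : Fin n // φ (1:G) i i = 0}
  haveI : Finite Cr := Subtype.finite
  let sd : Setoid Cr :=
    ⟨fun i j => φ (1:G) i.1 j.1 + φ (1:G) j.1 i.1 = 0,
     ⟨fun i => by rw [i.2, add_zero],
      fun {i j} h => by rw [add_comm]; exact h,
      fun {i j k} hij hjk => by
        refine sum_zero_pair (a := φ (1:G) i.1 j.1) (b := φ (1:G) j.1 k.1)
          (c := φ (1:G) k.1 j.1) (d := φ (1:G) j.1 i.1) ?_ ?_ ?_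
          (pairup φ hmul i.1 k.1)
        · have h := le_entry (φ (1:G)) (φ (1:G)) i.1 j.1 k.1
          rwa [hEE] at h
        · have h := le_entry (φ (1:G)) (φ (1:G)) k.1 j.1 i.1
          rwa [hEE] at h
        · calc (φ (1:G) i.1 j.1 + φ (1:G) j.1 k.1) + (φ (1:G) k.1 j.1 + φ (1:G) j.1 i.1)
              = (φ (1:G) i.1 j.1 + φ (1:G) j.1 i.1) + (φ (1:G) j.1 k.1 + φ (1:G) k.1 j.1) := by
                abel
          _ = 0 := by rw [hij, hjk, add_zero]⟩⟩
  let Q := Quotient sd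
  haveI : Finite Q := Quotient.finite sd
  -- the induced maps on critical classes
  have Rtot : ∀ (g : G) (i : Cr), ∃ k : Cr, Rr φ g i.1 k.1 := by
    intro g i
    obtain ⟨k, hk, hRk⟩ := Rtotal φ hmul g i.1 i.2
    exact ⟨⟨k, hk⟩, hRk⟩
  choose σc hσc using Rtot
  have wd : ∀ (g : G) (i j : Cr), φ (1:G) i.1 j.1 + φ (1:G) j.1 i.1 = 0 →
      Quotient.mk sd (σc g i) = Quotient.mk sd (σc g j) := by
    intro g i j hij
    apply Quotient.sound
    show φ (1:G) (σc g i).1 (σc g j).1 + φ (1:G) (σc g j).1 (σc g i).1 = 0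
    exact Rfunc φ hmul g i.1 _ _ (hσc g i)
      (Rcongr_left φ hmul g j.1 i.1 (σc g j).1 (hσc g j) (by rw [add_comm]; exact hij))
  let F : G → Q → Q := fun g => Quotient.lift (fun i => Quotient.mk sd (σc g i)) (wd g)
  have Funi : ∀ (g : G) (i k : Cr), Rr φ g i.1 k.1 →
      F g (Quotient.mk sd i) = Quotient.mk sd k := by
    intro g i k h
    show Quotient.mk sd (σc g i) = Quotient.mk sd k
    exact Quotient.sound (Rfunc φ hmul g i.1 (σc g i).1 k.1 (hσc g i) h)
  have Fone : ∀ q : Q, F 1 q = q := by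
    intro q
    induction q using Quotient.ind with
    | _ i => exact Funi 1 i i (Rone φ i.1 i.1 (by rw [i.2, add_zero]))
  have Fmul : ∀ (g h : G) (q : Q), F (g * h) q = F h (F g q) := by
    intro g h q
    induction q using Quotient.ind with
    | _ i =>
      have h1 : Rr φ (g * h) i.1 (σc h (σc g i)).1 :=
        Rcomp φ hmul g h i.1 (σc g i).1 _ (hσc g i) (hσc h (σc g i))
      exact Funi (g * h) i _ h1
  have Finv : ∀ (g : G) (q : Q), F g⁻¹ (F g q) = q := by
    intro g q
    rw [← Fmul g g⁻¹ q, mul_inv_cancel]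
    exact Fone q
  have Finv' : ∀ (g : G) (q : Q), F g (F g⁻¹ q) = q := by
    intro g q
    rw [← Fmul g⁻¹ g q, inv_mul_cancel]
    exact Fone q
  -- the homomorphism to permutations of critical classes
  let ρ : G →* Equiv.Perm Q :=
    { toFun := fun g => ⟨F g⁻¹, F g, Finv' g, Finv g⟩
      map_one' := Equiv.ext fun q => by
        show F (1:G)⁻¹ q = q
        rw [inv_one]; exact Fone q
      map_mul' := fun g h => Equiv.ext fun q => by
        show F (g * h)⁻¹ q = F g⁻¹ (F h⁻¹ q)
        rw [mul_inv_rev]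
        exact Fmul h⁻¹ g⁻¹ q }
  let H : Subgroup G := MonoidHom.ker ρ
  have memH : ∀ g : G, g ∈ H ↔ ∀ i : Cr, Rr φ g i.1 i.1 := by
    intro g
    constructor
    · intro hg i
      have h1 : ρ g (Quotient.mk sd i) = Quotient.mk sd i := by
        rw [MonoidHom.mem_ker.mp hg]; rfl
      have h2 : Quotient.mk sd (σc g⁻¹ i) = Quotient.mk sd i := h1
      have h3 := Quotient.exact h2
      have h4 : Rr φ g⁻¹ i.1 i.1 :=
        Rcongr_right φ hmul g⁻¹ i.1 (σc g⁻¹ i).1 i.1 (hσc g⁻¹ i) h3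
      have h5 := Rsymm φ g⁻¹ i.1 i.1 h4
      rwa [inv_inv] at h5
    · intro hR
      apply MonoidHom.mem_ker.mpr
      apply Equiv.ext
      intro q
      induction q using Quotient.ind with
      | _ i =>
        show F g⁻¹ (Quotient.mk sd i) = Quotient.mk sd i
        exact Funi g⁻¹ i i (Rsymm φ g i.1 i.1 (hR i))
  -- index bounds
  have hidx : H.index = Nat.card ρ.range := Subgroup.index_ker ρ
  have hQn : Nat.card Q ≤ n := by
    have hs : Nat.card Q ≤ Nat.card Cr :=
      Nat.card_le_card_of_surjective (Quotient.mk sd)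
        (fun q => by
          induction q using Quotient.ind with
          | _ i => exact ⟨i, rfl⟩)
    have hc : Nat.card Cr ≤ Nat.card (Fin n) :=
      Nat.card_le_card_of_injective Subtype.val Subtype.val_injective
    have hfn : Nat.card (Fin n) = n := by
      rw [Nat.card_eq_fintype_card, Fintype.card_fin]
    omega
  have hperm : Nat.card (Equiv.Perm Q) = (Nat.card Q).factorial := by
    letI : Fintype Q := Fintype.ofFinite Q
    rw [Nat.card_eq_fintype_card, Nat.card_eq_fintype_card, Fintype.card_perm]
  have hindle : H.index ≤ Nat.factorial n := by
    rw [hidx]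
    calc Nat.card ρ.range ≤ Nat.card (Equiv.Perm Q) :=
          Nat.card_le_card_of_injective Subtype.val Subtype.val_injective
    _ = (Nat.card Q).factorial := hperm
    _ ≤ Nat.factorial n := Nat.factorial_le hQn
  have hindpos : 0 < H.index := by
    rw [hidx]
    haveI : Nonempty ρ.range := ⟨1⟩
    exact Nat.card_pos
  -- the rigidity consequence
  have keyH : ∀ g : G, g ∈ H → (∀ i : Cr, φ g i.1 i.1 = 0) → g = 1 := by
    intro g hg h0
    apply hinj
    apply key φ hmul g
    · intro i hi
      exact h0 ⟨i, hi⟩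
    · intro i hi
      have hr : φ g i i + φ g⁻¹ i i = 0 := (memH g).mp hg ⟨i, hi⟩
      rwa [h0 ⟨i, hi⟩, zero_add] at hr
  have chain2 : ∀ (a b : G) (i : Fin n), φ a i i + φ b i i ≤ φ (a * b) i i := by
    intro a b i
    have h := le_entry (φ a) (φ b) i i i
    rwa [← hmul] at h
  have commpos : ∀ g h : G, g ∈ H → h ∈ H → ∀ i : Cr,
      (0 : Trop) ≤ φ (g * h * g⁻¹ * h⁻¹) i.1 i.1 := by
    intro g h hg hh i
    have hgi : φ g i.1 i.1 + φ g⁻¹ i.1 i.1 = 0 := (memH g).mp hg i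
    have hhi : φ h i.1 i.1 + φ h⁻¹ i.1 i.1 = 0 := (memH h).mp hh i
    calc (0 : Trop) = (φ g i.1 i.1 + φ g⁻¹ i.1 i.1) + (φ h i.1 i.1 + φ h⁻¹ i.1 i.1) := by
          rw [hgi, hhi, add_zero]
    _ = ((φ g i.1 i.1 + φ h i.1 i.1) + φ g⁻¹ i.1 i.1) + φ h⁻¹ i.1 i.1 := by abel
    _ ≤ ((φ (g * h) i.1 i.1) + φ g⁻¹ i.1 i.1) + φ h⁻¹ i.1 i.1 :=
          add_le_add_left (add_le_add_left (chain2 g h i.1) _) _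
    _ ≤ (φ (g * h * g⁻¹) i.1 i.1) + φ h⁻¹ i.1 i.1 := add_le_add_left (chain2 (g * h) g⁻¹ i.1) _
    _ ≤ φ (g * h * g⁻¹ * h⁻¹) i.1 i.1 := chain2 (g * h * g⁻¹) h⁻¹ i.1
  have zero_of_mem_pos : ∀ g : G, g ∈ H → (∀ i : Cr, (0 : Trop) ≤ φ g i.1 i.1) →
      (∀ i : Cr, (0 : Trop) ≤ φ g⁻¹ i.1 i.1) → ∀ i : Cr, φ g i.1 i.1 = 0 := by
    intro g hg hp hp' i
    have hr : φ g i.1 i.1 + φ g⁻¹ i.1 i.1 = 0 := (memH g).mp hg i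
    refine le_antisymm ?_ (hp i)
    calc φ g i.1 i.1 = φ g i.1 i.1 + 0 := (add_zero _).symm
    _ ≤ φ g i.1 i.1 + φ g⁻¹ i.1 i.1 := add_le_add_right (hp' i) _
    _ = 0 := hr
  refine ⟨H, ?_, ?_, hindpos, hindle⟩
  · -- abelian
    intro a b
    have ha : (a : G) ∈ H := a.2
    have hb : (b : G) ∈ H := b.2
    set g : G := (a : G)
    set h : G := (b : G)
    have hcmem : g * h * g⁻¹ * h⁻¹ ∈ H :=
      mul_mem (mul_mem (mul_mem ha hb) (inv_mem ha)) (inv_mem hb)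
    have hinvc : (g * h * g⁻¹ * h⁻¹)⁻¹ = h * g * h⁻¹ * g⁻¹ := by group
    have hzero : ∀ i : Cr, φ (g * h * g⁻¹ * h⁻¹) i.1 i.1 = 0 := by
      apply zero_of_mem_pos _ hcmem
      · exact commpos g h ha hb
      · intro i
        rw [hinvc]
        exact commpos h g hb ha i
    have hcone : g * h * g⁻¹ * h⁻¹ = 1 := keyH _ hcmem hzero
    have : g * h = h * g := commutatorElement_eq_one_iff_mul_comm.mp hcone
    exact Subtype.ext this
  · -- torsion-free
    intro a ha
    obtain ⟨m, hm0, hpow⟩ := isOfFinOrder_iff_pow_eq_one.mp ha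
    have hgH : (a : G) ∈ H := a.2
    have hpg : (a : G) ^ m = 1 := by
      have := congrArg (Subtype.val) hpow
      rwa [SubgroupClass.coe_pow] at this
    have hpg' : ((a : G)⁻¹) ^ m = 1 := by
      rw [inv_pow, hpg, inv_one]
    have hzero : ∀ i : Cr, φ (a : G) i.1 i.1 = 0 := by
      intro i
      have hr : φ (a : G) i.1 i.1 + φ (a : G)⁻¹ i.1 i.1 = 0 := (memH _).mp hgH i
      obtain ⟨x, hx, hx'⟩ := eq_real_of_add_eq_zero hr
      have p1 := powerle φ hmul (a : G) i.1 i.2 x hx m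
      rw [hpg, i.2] at p1
      have p2 := powerle φ hmul ((a : G)⁻¹) i.1 i.2 (-x) hx' m
      rw [hpg', i.2] at p2
      have q1 : (m : ℝ) * x ≤ 0 := by exact_mod_cast p1
      have q2 : (m : ℝ) * (-x) ≤ 0 := by exact_mod_cast p2
      have hmpos : (0 : ℝ) < (m : ℝ) := by exact_mod_cast hm0
      have hx0 : x = 0 := by nlinarith
      rw [hx, hx0]
      rfl
    have : (a : G) = 1 := keyH _ hgH hzero
    exact Subtype.ext this
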